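/- For all n ≥ 4, the Erdős–Gyárfás function satisfies f(n, 4, 5) ≥ (5/6)(n − 1); that is, every edge-coloring of the complete graph K_n in which every 4-element vertex set spans at least 5 distinct colors must use at least (5/6)(n − 1) colors. -/

import Mathlib

/-- The set of colors spanned by a vertex subset `S` under the edge-coloring `χ`. -/
def spannedColors {n : ℕ} (χ : Fin n → Fin n → ℕ) (S : Finset (Fin n)) : Finset ℕ :=
  ((S ×ˢ S).filter (fun e => e.1 ≠ e.2)).image (fun e => χ e.1 e.2)

/-- `χ` is a `(p, q)`-coloring of `K_n`: it is symmetric (a coloring of unordered pairs)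
and every `p`-element vertex set spans at least `q` distinct colors. -/
def IsPQColoring (n p q : ℕ) (χ : Fin n → Fin n → ℕ) : Prop :=
  (∀ i j, χ i j = χ j i) ∧
  ∀ S : Finset (Fin n), S.card = p → q ≤ (spannedColors χ S).card

/-- The set of colors used by `χ` on the edges of `K_n`. -/
def usedColors {n : ℕ} (χ : Fin n → Fin n → ℕ) : Finset ℕ :=
  ((Finset.univ : Finset (Fin n × Fin n)).filter (fun e => e.1 ≠ e.2)).image
    (fun e => χ e.1 e.2)

/-- The Erdős–Gyárfás function `f(n, p, q)`: the minimum number of colors in a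
`(p, q)`-coloring of `K_n`. -/
noncomputable def erdosGyarfas (n p q : ℕ) : ℕ :=
  sInf {m : ℕ | ∃ χ : Fin n → Fin n → ℕ, IsPQColoring n p q χ ∧ (usedColors χ).card = m}

open Finset

namespace EG

variable {n : ℕ}

lemma card_le_four (a b c d : ℕ) : ({a, b, c, d} : Finset ℕ).card ≤ 4 := by
  refine le_trans (Finset.card_insert_le _ _) (Nat.succ_le_succ ?_)
  refine le_trans (Finset.card_insert_le _ _) (Nat.succ_le_succ ?_)
  refine le_trans (Finset.card_insert_le _ _) (Nat.succ_le_succ ?_)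
  simp

lemma spanned_subset (χ : Fin n → Fin n → ℕ) (hsym : ∀ i j, χ i j = χ j i)
    (a b c d : Fin n) :
    spannedColors χ {a, b, c, d} ⊆ {χ a b, χ a c, χ a d, χ b c, χ b d, χ c d} := by
  intro u hu
  simp only [spannedColors, Finset.mem_image, Finset.mem_filter, Finset.mem_product] at hu
  obtain ⟨⟨i, j⟩, ⟨⟨hi, hj⟩, hij⟩, rfl⟩ := hu
  simp only [Finset.mem_insert, Finset.mem_singleton] at hi hj ⊢
  rcases hi with rfl | rfl | rfl | rfl <;> rcases hj with rfl | rfl | rfl | rfl <;>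
    first
      | exact absurd rfl hij
      | tauto
      | (rw [hsym]; tauto)

lemma tool (χ : Fin n → Fin n → ℕ) (hsym : ∀ i j, χ i j = χ j i)
    (H5 : ∀ S : Finset (Fin n), S.card = 4 → 5 ≤ (spannedColors χ S).card)
    (a b c d : Fin n) (hab : a ≠ b) (hac : a ≠ c) (had : a ≠ d)
    (hbc : b ≠ c) (hbd : b ≠ d) (hcd : c ≠ d)
    (cols : Finset ℕ) (hcard : cols.card ≤ 4)
    (m1 : χ a b ∈ cols) (m2 : χ a c ∈ cols) (m3 : χ a d ∈ cols)
    (m4 : χ b c ∈ cols) (m5 : χ b d ∈ cols) (m6 : χ c d ∈ cols) : False := by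
  have hS : ({a, b, c, d} : Finset (Fin n)).card = 4 := by
    rw [Finset.card_insert_of_notMem (by simp [hab, hac, had]),
        Finset.card_insert_of_notMem (by simp [hbc, hbd]),
        Finset.card_insert_of_notMem (by simp [hcd]), Finset.card_singleton]
  have h1 := H5 _ hS
  have h2 : spannedColors χ {a, b, c, d} ⊆ cols := by
    refine (spanned_subset χ hsym a b c d).trans ?_
    intro u hu
    simp only [Finset.mem_insert, Finset.mem_singleton] at hu
    rcases hu with rfl | rfl | rfl | rfl | rfl | rfl <;> assumption
  have := (Finset.card_le_card h2).trans hcard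
  omega

/-- neighbors of `x` in the color class `c`. -/
def Nbr (χ : Fin n → Fin n → ℕ) (c : ℕ) (x : Fin n) : Finset (Fin n) :=
  Finset.univ.filter (fun y => y ≠ x ∧ χ x y = c)

lemma mem_Nbr {χ : Fin n → Fin n → ℕ} {c : ℕ} {x y : Fin n} :
    y ∈ Nbr χ c x ↔ y ≠ x ∧ χ x y = c := by simp [Nbr]

variable {χ : Fin n → Fin n → ℕ}

section structure_lemmas

variable (hsym : ∀ i j, χ i j = χ j i)
  (H5 : ∀ S : Finset (Fin n), S.card = 4 → 5 ≤ (spannedColors χ S).card)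
  (hn : 4 ≤ n)

include hsym H5

lemma deg_le_two (c : ℕ) (x : Fin n) : (Nbr χ c x).card ≤ 2 := by
  by_contra h
  push_neg at h
  obtain ⟨y, hy, z, hz, w, hw, hyz, hyw, hzw⟩ := Finset.two_lt_card.1 h
  rw [mem_Nbr] at hy hz hw
  refine tool χ hsym H5 x y z w (Ne.symm hy.1) (Ne.symm hz.1) (Ne.symm hw.1) hyz hyw hzw
    {c, χ y z, χ y w, χ z w} (card_le_four _ _ _ _) ?_ ?_ ?_ ?_ ?_ ?_ <;>
    simp [hy.2, hz.2, hw.2]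

include hn

omit hsym H5 in
/-- a vertex not among three given ones. -/
lemma exists_fourth (x y z : Fin n) : ∃ t : Fin n, t ≠ x ∧ t ≠ y ∧ t ≠ z := by
  have hsub : ¬ (Finset.univ : Finset (Fin n)) ⊆ {x, y, z} := by
    intro hs
    have h1 := Finset.card_le_card hs
    have h2 : ({x, y, z} : Finset (Fin n)).card ≤ 3 := by
      refine le_trans (Finset.card_insert_le _ _) (Nat.succ_le_succ ?_)
      refine le_trans (Finset.card_insert_le _ _) (Nat.succ_le_succ ?_)
      simp
    rw [Finset.card_univ, Fintype.card_fin] at h1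
    omega
  obtain ⟨t, -, ht⟩ := Finset.not_subset.1 hsub
  simp only [Finset.mem_insert, Finset.mem_singleton, not_or] at ht
  exact ⟨t, ht.1, ht.2.1, ht.2.2⟩

/-- no monochromatic triangle (together with apex edges): if `χ x y = χ x z = χ y z = c`
with `x,y,z` distinct, contradiction. -/
lemma no_triangle {c : ℕ} {x y z : Fin n} (hxy : x ≠ y) (hxz : x ≠ z) (hyz : y ≠ z)
    (h1 : χ x y = c) (h2 : χ x z = c) (h3 : χ y z = c) : False := by
  obtain ⟨t, htx, hty, htz⟩ := exists_fourth hn x y z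
  refine tool χ hsym H5 x y z t hxy hxz (Ne.symm htx) hyz (Ne.symm hty) (Ne.symm htz)
    {c, χ x t, χ y t, χ z t} (card_le_four _ _ _ _) ?_ ?_ ?_ ?_ ?_ ?_ <;>
    simp [h1, h2, h3]

/-- a neighbor of a degree-2 vertex has degree 1. -/
lemma nbr_deg_one {c : ℕ} {x y : Fin n} (hx : (Nbr χ c x).card = 2)
    (hy : y ∈ Nbr χ c x) : (Nbr χ c y).card = 1 := by
  have hxy : x ∈ Nbr χ c y := by
    rw [mem_Nbr] at hy ⊢
    exact ⟨Ne.symm hy.1, by rw [hsym]; exact hy.2⟩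
  obtain ⟨z, hz, hzy⟩ := Finset.exists_mem_ne (by omega : 1 < (Nbr χ c x).card) y
  rw [mem_Nbr] at hy hz
  have hsub : Nbr χ c y ⊆ {x} := by
    intro w hw
    rw [Finset.mem_singleton]
    by_contra hwx
    rw [mem_Nbr] at hw
    by_cases hwz : w = z
    · subst hwz
      exact no_triangle hsym H5 hn (Ne.symm hy.1) (Ne.symm hz.1) (Ne.symm hw.1)
        hy.2 hz.2 hw.2
    · exact tool χ hsym H5 x y z w (Ne.symm hy.1) (Ne.symm hz.1) (Ne.symm hwx)
        (Ne.symm hzy) (Ne.symm hw.1) (fun h => hwz h.symm)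
        {c, χ x w, χ y z, χ z w} (card_le_four _ _ _ _)
        (by simp [hy.2]) (by simp [hz.2]) (by simp) (by simp) (by simp [hw.2]) (by simp)
  have heq : Nbr χ c y = {x} := Finset.Subset.antisymm hsub (Finset.singleton_subset_iff.2 hxy)
  rw [heq, Finset.card_singleton]

/-- The base edge of a cherry: its color is "fresh", and the base vertices have
degree 1 in the base color class. -/
lemma base_singleton {c : ℕ} {x y z : Fin n} (hxy : x ≠ y) (hxz : x ≠ z) (hyz : y ≠ z)
    (h1 : χ x y = c) (h2 : χ x z = c) : Nbr χ (χ y z) y = {z} := by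
  have hcc : χ y z ≠ c := by
    intro h
    exact no_triangle hsym H5 hn hxy hxz hyz h1 h2 h
  have hzmem : z ∈ Nbr χ (χ y z) y := mem_Nbr.2 ⟨Ne.symm hyz, rfl⟩
  have hsub : Nbr χ (χ y z) y ⊆ {z} := by
    intro w hw
    rw [Finset.mem_singleton]
    by_contra hwz
    rw [mem_Nbr] at hw
    have hwx : w ≠ x := by
      intro h
      subst h
      rw [hsym] at hw
      exact hcc (hw.2 ▸ h1.symm ▸ rfl) |>.elim
    exact tool χ hsym H5 x y z w hxy hxz (Ne.symm hwx) hyz (Ne.symm hw.1) (fun h => hwz h.symm)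
      {c, χ y z, χ x w, χ z w} (card_le_four _ _ _ _)
      (by simp [h1]) (by simp [h2]) (by simp) (by simp) (by simp [hw.2]) (by simp)
  exact Finset.Subset.antisymm hsub (Finset.singleton_subset_iff.2 hzmem)

/-- an edge is the base of at most one cherry. -/
lemma base_unique {x₁ x₂ y z : Fin n} (h12 : x₁ ≠ x₂)
    (h1y : x₁ ≠ y) (h1z : x₁ ≠ z) (h2y : x₂ ≠ y) (h2z : x₂ ≠ z) (hyz : y ≠ z)
    (e1 : χ x₁ y = χ x₁ z) (e2 : χ x₂ y = χ x₂ z) : False := by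
  exact tool χ hsym H5 x₁ x₂ y z h12 h1y h1z h2y h2z hyz
    {χ x₁ x₂, χ x₁ y, χ x₂ y, χ y z} (card_le_four _ _ _ _)
    (by simp) (by simp) (by simp [← e1]) (by simp) (by simp [← e2]) (by simp)

end structure_lemmas

section counting

/-- cherry centers of color `c`. -/
def Ac (χ : Fin n → Fin n → ℕ) (c : ℕ) : Finset (Fin n) :=
  Finset.univ.filter (fun x => (Nbr χ c x).card = 2)

/-- degree-1 vertices of color `c`. -/
def Dg1 (χ : Fin n → Fin n → ℕ) (c : ℕ) : Finset (Fin n) :=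
  Finset.univ.filter (fun x => (Nbr χ c x).card = 1)

/-- cherry tips. -/
def Bc (χ : Fin n → Fin n → ℕ) (c : ℕ) : Finset (Fin n) :=
  Finset.univ.filter (fun x => (Nbr χ c x).card = 1 ∧ ∃ y ∈ Nbr χ c x, (Nbr χ c y).card = 2)

/-- endpoints of isolated edges. -/
def Dc (χ : Fin n → Fin n → ℕ) (c : ℕ) : Finset (Fin n) :=
  Finset.univ.filter (fun x => (Nbr χ c x).card = 1 ∧ ∀ y ∈ Nbr χ c x, (Nbr χ c y).card ≠ 2)

variable (hsym : ∀ i j, χ i j = χ j i)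
  (H5 : ∀ S : Finset (Fin n), S.card = 4 → 5 ≤ (spannedColors χ S).card)
  (hn : 4 ≤ n)

include hsym H5

lemma sum_deg (c : ℕ) :
    ∑ x : Fin n, (Nbr χ c x).card = 2 * (Ac χ c).card + (Dg1 χ c).card := by
  have key : ∀ x : Fin n, (Nbr χ c x).card =
      (if (Nbr χ c x).card = 2 then (2:ℕ) else 0) +
        (if (Nbr χ c x).card = 1 then (1:ℕ) else 0) := by
    intro x
    have h := deg_le_two hsym H5 c x
    split_ifs <;> omega
  calc ∑ x : Fin n, (Nbr χ c x).card
      = ∑ x : Fin n, ((if (Nbr χ c x).card = 2 then (2:ℕ) else 0) +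
          (if (Nbr χ c x).card = 1 then (1:ℕ) else 0)) :=
        Finset.sum_congr rfl (fun x _ => key x)
    _ = (∑ x : Fin n, if (Nbr χ c x).card = 2 then (2:ℕ) else 0) +
          ∑ x : Fin n, (if (Nbr χ c x).card = 1 then (1:ℕ) else 0) := Finset.sum_add_distrib
    _ = 2 * (Ac χ c).card + (Dg1 χ c).card := by
        rw [← Finset.sum_filter, ← Finset.sum_filter]
        simp [Ac, Dg1, mul_comm]

omit hsym H5 in
lemma Dg1_split (c : ℕ) : (Dg1 χ c).card = (Bc χ c).card + (Dc χ c).card := by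
  classical
  have h := Finset.card_filter_add_card_filter_not
    (s := Dg1 χ c) (p := fun x => ∃ y ∈ Nbr χ c x, (Nbr χ c y).card = 2)
  have h2 : (Dg1 χ c).filter (fun x => ∃ y ∈ Nbr χ c x, (Nbr χ c y).card = 2) = Bc χ c := by
    ext x
    simp only [Dg1, Bc, Finset.mem_filter, Finset.mem_univ, true_and]
    try tauto
  have h3 : (Dg1 χ c).filter (fun x => ¬ ∃ y ∈ Nbr χ c x, (Nbr χ c y).card = 2) = Dc χ c := by
    ext x
    simp only [Dg1, Dc, Finset.mem_filter, Finset.mem_univ, true_and, not_exists]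
    push_neg
    try tauto
  rw [h2, h3] at h
  omega

include hn

lemma Bc_eq (c : ℕ) : Bc χ c = (Ac χ c).biUnion (Nbr χ c) := by
  ext x
  simp only [Bc, Ac, Finset.mem_biUnion, Finset.mem_filter, Finset.mem_univ, true_and]
  constructor
  · rintro ⟨_, y, hy, hy2⟩
    exact ⟨y, hy2, mem_Nbr.2 ⟨Ne.symm (mem_Nbr.1 hy).1, by rw [hsym]; exact (mem_Nbr.1 hy).2⟩⟩
  · rintro ⟨y, hy2, hx⟩
    refine ⟨nbr_deg_one hsym H5 hn hy2 hx, y, ?_, hy2⟩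
    exact mem_Nbr.2 ⟨Ne.symm (mem_Nbr.1 hx).1, by rw [hsym]; exact (mem_Nbr.1 hx).2⟩

lemma Bc_card (c : ℕ) : (Bc χ c).card = 2 * (Ac χ c).card := by
  rw [Bc_eq hsym H5 hn c, Finset.card_biUnion]
  · have he : ∑ u ∈ Ac χ c, (Nbr χ c u).card = ∑ _u ∈ Ac χ c, 2 :=
      Finset.sum_congr rfl (fun a ha => (Finset.mem_filter.1 ha).2)
    rw [he, Finset.sum_const, smul_eq_mul, mul_comm]
  · intro a ha b hb hab
    simp only [Ac, Finset.mem_coe, Finset.mem_filter, Finset.mem_univ, true_and] at ha hb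
    rw [Function.onFun, Finset.disjoint_left]
    intro u hu hu'
    have h1 : (Nbr χ c u).card = 1 := nbr_deg_one hsym H5 hn ha hu
    have ha' : a ∈ Nbr χ c u :=
      mem_Nbr.2 ⟨Ne.symm (mem_Nbr.1 hu).1, by rw [hsym]; exact (mem_Nbr.1 hu).2⟩
    have hb' : b ∈ Nbr χ c u :=
      mem_Nbr.2 ⟨Ne.symm (mem_Nbr.1 hu').1, by rw [hsym]; exact (mem_Nbr.1 hu').2⟩
    have hsub : ({a, b} : Finset (Fin n)) ⊆ Nbr χ c u := by
      intro v hv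
      simp only [Finset.mem_insert, Finset.mem_singleton] at hv
      rcases hv with rfl | rfl <;> assumption
    have hcard := Finset.card_le_card hsub
    rw [Finset.card_insert_of_notMem (by simp [hab]), Finset.card_singleton] at hcard
    omega

omit hsym H5 hn in
lemma vertex_bound (c : ℕ) : (Ac χ c).card + (Dg1 χ c).card ≤ n := by
  have hd : Disjoint (Ac χ c) (Dg1 χ c) := by
    rw [Finset.disjoint_left]
    intro x hx hx'
    simp only [Ac, Dg1, Finset.mem_filter, Finset.mem_univ, true_and] at hx hx'
    omega
  calc (Ac χ c).card + (Dg1 χ c).card = ((Ac χ c) ∪ (Dg1 χ c)).card :=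
        (Finset.card_union_of_disjoint hd).symm
    _ ≤ (Finset.univ : Finset (Fin n)).card := Finset.card_le_card (Finset.subset_univ _)
    _ = n := by simp

omit hsym H5 hn in
lemma global_count :
    n * (n - 1) = ∑ c ∈ usedColors χ, ∑ x : Fin n, (Nbr χ c x).card := by
  classical
  set T : Finset (Fin n × Fin n) :=
    (Finset.univ : Finset (Fin n × Fin n)).filter (fun e => e.1 ≠ e.2) with hT
  have hfib : T.card = ∑ c ∈ usedColors χ, (T.filter (fun e => χ e.1 e.2 = c)).card :=
    Finset.card_eq_sum_card_fiberwise (fun e he => Finset.mem_image_of_mem _ he)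
  have hper : ∀ c : ℕ, (T.filter (fun e => χ e.1 e.2 = c)).card = ∑ x : Fin n, (Nbr χ c x).card := by
    intro c
    rw [Finset.card_eq_sum_card_fiberwise
      (f := Prod.fst) (t := (Finset.univ : Finset (Fin n)))
      (fun e _ => Finset.mem_univ _)]
    refine Finset.sum_congr rfl (fun x _ => ?_)
    apply Finset.card_bij (fun e _ => e.2)
    · intro e he
      simp only [hT, Finset.mem_filter, Finset.mem_univ, true_and] at he
      obtain ⟨⟨hne, hcol⟩, hfst⟩ := he
      exact mem_Nbr.2 ⟨by rw [← hfst]; exact (Ne.symm hne), by rw [← hfst]; exact hcol⟩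
    · intro e1 h1 e2 h2 heq
      simp only [hT, Finset.mem_filter] at h1 h2
      exact Prod.ext (h1.2.trans h2.2.symm) heq
    · intro y hy
      rw [mem_Nbr] at hy
      exact ⟨(x, y), by simp [hT, Ne.symm hy.1, hy.2], rfl⟩
  have hTcard : T.card + n = n * n := by
    have h1 := Finset.card_filter_add_card_filter_not
      (s := (Finset.univ : Finset (Fin n × Fin n))) (p := fun e => e.1 ≠ e.2)
    have h2 : ((Finset.univ : Finset (Fin n × Fin n)).filter (fun e => ¬ e.1 ≠ e.2)).card = n := by
      have : ((Finset.univ : Finset (Fin n × Fin n)).filter (fun e => ¬ e.1 ≠ e.2)) =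
          ((Finset.univ : Finset (Fin n × Fin n)).filter (fun e => e.1 = e.2)) := by
        simp
      rw [this]
      have := Finset.card_bij
        (s := (Finset.univ : Finset (Fin n × Fin n)).filter (fun e => e.1 = e.2))
        (t := (Finset.univ : Finset (Fin n)))
        (fun e _ => e.1)
        (fun e _ => Finset.mem_univ _)
        (by
          intro e1 h1 e2 h2 heq
          simp only [Finset.mem_filter] at h1 h2
          exact Prod.ext heq (by rw [← h1.2, ← h2.2]; exact heq))
        (by
          intro x _
          exact ⟨(x, x), by simp, rfl⟩)
      rw [this, Finset.card_univ, Fintype.card_fin]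
    have h3 : ((Finset.univ : Finset (Fin n × Fin n))).card = n * n := by
      simp [Finset.card_univ]
    rw [hT]
    omega
  have hmul : n * (n - 1) + n = n * n := by
    rcases Nat.eq_zero_or_pos n with h | h
    · simp [h]
    · have hsucc : n - 1 + 1 = n := Nat.succ_pred_eq_of_pos h
      calc n * (n - 1) + n = n * ((n - 1) + 1) := by ring
        _ = n * n := by rw [hsucc]
  have hTval : T.card = n * (n - 1) := by omega
  rw [← hTval, hfib]
  exact Finset.sum_congr rfl (fun c _ => hper c)

end counting

section injection

/-- the smaller tip of a cherry. -/
noncomputable def ymin (χ : Fin n → Fin n → ℕ) (c : ℕ) (x : Fin n) : Fin n :=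
  WithTop.untopD x (Nbr χ c x).min

/-- the larger tip of a cherry. -/
noncomputable def zmax (χ : Fin n → Fin n → ℕ) (c : ℕ) (x : Fin n) : Fin n :=
  WithBot.unbotD x (Nbr χ c x).max

lemma sigma_eq_iff {a c : ℕ} {b d : Fin n} :
    (⟨a, b⟩ : (_ : ℕ) × Fin n) = ⟨c, d⟩ ↔ a = c ∧ b = d := by
  constructor
  · intro h
    cases h
    exact ⟨rfl, rfl⟩
  · rintro ⟨rfl, rfl⟩
    rfl

lemma cherry_facts {c : ℕ} {x : Fin n} (hx : (Nbr χ c x).card = 2) :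
    ymin χ c x ∈ Nbr χ c x ∧ zmax χ c x ∈ Nbr χ c x ∧ ymin χ c x ≠ zmax χ c x := by
  have hne : (Nbr χ c x).Nonempty := Finset.card_pos.1 (by omega)
  have h1 : ymin χ c x = (Nbr χ c x).min' hne := by
    rw [ymin, ← Finset.coe_min' hne, WithTop.untopD_coe]
  have h2 : zmax χ c x = (Nbr χ c x).max' hne := by
    rw [zmax, ← Finset.coe_max' hne, WithBot.unbotD_coe]
  refine ⟨h1 ▸ Finset.min'_mem _ _, h2 ▸ Finset.max'_mem _ _, ?_⟩
  rw [h1, h2]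
  exact ne_of_lt (Finset.min'_lt_max'_of_card _ (by omega))

variable (hsym : ∀ i j, χ i j = χ j i)
  (H5 : ∀ S : Finset (Fin n), S.card = 4 → 5 ≤ (spannedColors χ S).card)
  (hn : 4 ≤ n)

include hsym H5 hn

lemma cherry_base {c : ℕ} {x : Fin n} (hx : (Nbr χ c x).card = 2) :
    Nbr χ (χ (ymin χ c x) (zmax χ c x)) (ymin χ c x) = {zmax χ c x} ∧
    Nbr χ (χ (ymin χ c x) (zmax χ c x)) (zmax χ c x) = {ymin χ c x} := by
  obtain ⟨hy, hz, hyz⟩ := cherry_facts hx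
  rw [mem_Nbr] at hy hz
  refine ⟨base_singleton hsym H5 hn (Ne.symm hy.1) (Ne.symm hz.1) hyz hy.2 hz.2, ?_⟩
  have h := base_singleton hsym H5 hn (Ne.symm hz.1) (Ne.symm hy.1) (Ne.symm hyz) hz.2 hy.2
  rwa [hsym (zmax χ c x) (ymin χ c x)] at h

lemma inj_bound :
    2 * (∑ c ∈ usedColors χ, (Ac χ c).card) ≤ ∑ c ∈ usedColors χ, (Dc χ c).card := by
  classical
  set Ch := (usedColors χ).sigma (fun c => Ac χ c) with hCh
  set DS := (usedColors χ).sigma (fun c => Dc χ c) with hDS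
  set F1 : ((_ : ℕ) × Fin n) → ((_ : ℕ) × Fin n) := fun p =>
    ⟨χ (ymin χ p.1 p.2) (zmax χ p.1 p.2), ymin χ p.1 p.2⟩ with hF1
  set F2 : ((_ : ℕ) × Fin n) → ((_ : ℕ) × Fin n) := fun p =>
    ⟨χ (ymin χ p.1 p.2) (zmax χ p.1 p.2), zmax χ p.1 p.2⟩ with hF2
  have hmemCh : ∀ p ∈ Ch, p.1 ∈ usedColors χ ∧ (Nbr χ p.1 p.2).card = 2 := by
    intro p hp
    rw [hCh, Finset.mem_sigma] at hp
    exact ⟨hp.1, (Finset.mem_filter.1 hp.2).2⟩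
  -- core rigidity: two cherries with the same tip pair must coincide
  have core : ∀ p ∈ Ch, ∀ q ∈ Ch,
      ymin χ p.1 p.2 = ymin χ q.1 q.2 → zmax χ p.1 p.2 = zmax χ q.1 q.2 → p = q := by
    rintro ⟨c1, x1⟩ hp ⟨c2, x2⟩ hq hy hz
    obtain ⟨-, hx1⟩ := hmemCh _ hp
    obtain ⟨-, hx2⟩ := hmemCh _ hq
    obtain ⟨hy1, hz1, hyz1⟩ := cherry_facts hx1
    obtain ⟨hy2, hz2, hyz2⟩ := cherry_facts hx2
    rw [mem_Nbr] at hy1 hz1 hy2 hz2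
    simp only at hy hz hy1 hz1 hy2 hz2 hyz1 hyz2
    have hx12 : x1 = x2 := by
      by_contra hne
      exact base_unique hsym H5 hn hne (Ne.symm hy1.1) (Ne.symm hz1.1)
        (by rw [hy]; exact Ne.symm hy2.1) (by rw [hz]; exact Ne.symm hz2.1) hyz1
        (hy1.2.trans hz1.2.symm)
        (by rw [hy, hz]; exact hy2.2.trans hz2.2.symm)
    subst hx12
    have hc12 : c1 = c2 := by
      rw [← hy1.2, hy, hy2.2]
    subst hc12
    rfl
  -- tips are determined by (base color, one tip)
  have tipz : ∀ p ∈ Ch, ∀ q ∈ Ch,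
      χ (ymin χ p.1 p.2) (zmax χ p.1 p.2) = χ (ymin χ q.1 q.2) (zmax χ q.1 q.2) →
      ymin χ p.1 p.2 = ymin χ q.1 q.2 → zmax χ p.1 p.2 = zmax χ q.1 q.2 := by
    intro p hp q hq hc hy
    obtain ⟨-, hx1⟩ := hmemCh _ hp
    obtain ⟨-, hx2⟩ := hmemCh _ hq
    obtain ⟨hb1, -⟩ := cherry_base hsym H5 hn hx1
    obtain ⟨hy2, hz2, hyz2⟩ := cherry_facts hx2
    rw [mem_Nbr] at hy2 hz2
    rw [hy] at hc
    have hmem : zmax χ q.1 q.2 ∈ Nbr χ (χ (ymin χ p.1 p.2) (zmax χ p.1 p.2)) (ymin χ p.1 p.2) := by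
      rw [mem_Nbr, hy]
      exact ⟨Ne.symm (cherry_facts hx2).2.2, hc.symm⟩
    rw [hb1, Finset.mem_singleton] at hmem
    exact hmem.symm
  have hinj1 : Set.InjOn F1 ↑Ch := by
    intro p hp q hq heq
    simp only [Finset.mem_coe] at hp hq
    rw [hF1] at heq
    simp only [sigma_eq_iff] at heq
    exact core p hp q hq heq.2 (tipz p hp q hq heq.1 heq.2)
  have hinj2 : Set.InjOn F2 ↑Ch := by
    intro p hp q hq heq
    simp only [Finset.mem_coe] at hp hq
    rw [hF2] at heq
    simp only [sigma_eq_iff] at heq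
    -- from z equal and base color equal, derive y equal
    obtain ⟨-, hx1⟩ := hmemCh _ hp
    obtain ⟨-, hx2⟩ := hmemCh _ hq
    obtain ⟨-, hb1⟩ := cherry_base hsym H5 hn hx1
    obtain ⟨hy2, hz2, hyz2⟩ := cherry_facts hx2
    rw [mem_Nbr] at hy2 hz2
    obtain ⟨hc', hz'⟩ := heq
    rw [hz'] at hc'
    have hmem : ymin χ q.1 q.2 ∈ Nbr χ (χ (ymin χ p.1 p.2) (zmax χ p.1 p.2)) (zmax χ p.1 p.2) := by
      rw [mem_Nbr, hz']
      refine ⟨(cherry_facts hx2).2.2, ?_⟩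
      rw [hc', hsym]
    rw [hb1, Finset.mem_singleton] at hmem
    exact core p hp q hq hmem.symm hz'
  -- images are disjoint
  have hdisj : Disjoint (Ch.image F1) (Ch.image F2) := by
    rw [Finset.disjoint_left]
    rintro r hr1 hr2
    obtain ⟨p, hp, hFp⟩ := Finset.mem_image.1 hr1
    obtain ⟨q, hq, hFq⟩ := Finset.mem_image.1 hr2
    have heq : F1 p = F2 q := hFp.trans hFq.symm
    rw [hF1, hF2] at heq
    simp only [sigma_eq_iff] at heq
    -- y_p = z_q, so z_p = y_q, so the cherries coincide, contradicting y ≠ z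
    obtain ⟨-, hx1⟩ := hmemCh _ hp
    obtain ⟨-, hx2⟩ := hmemCh _ hq
    obtain ⟨hb1p, -⟩ := cherry_base hsym H5 hn hx1
    obtain ⟨-, hb2q⟩ := cherry_base hsym H5 hn hx2
    obtain ⟨hy1, hz1, hyz1⟩ := cherry_facts hx1
    obtain ⟨hy2, hz2, hyz2⟩ := cherry_facts hx2
    obtain ⟨hc', hyzq⟩ := heq
    have hzy : zmax χ p.1 p.2 = ymin χ q.1 q.2 := by
      have hmem : zmax χ p.1 p.2 ∈ Nbr χ (χ (ymin χ q.1 q.2) (zmax χ q.1 q.2)) (zmax χ q.1 q.2) := by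
        rw [mem_Nbr]
        constructor
        · intro h
          exact hyz1 (hyzq.trans h.symm)
        · calc χ (zmax χ q.1 q.2) (zmax χ p.1 p.2)
              = χ (zmax χ p.1 p.2) (zmax χ q.1 q.2) := hsym _ _
            _ = χ (ymin χ p.1 p.2) (zmax χ p.1 p.2) := by
                rw [hyzq, hsym]
            _ = χ (ymin χ q.1 q.2) (zmax χ q.1 q.2) := hc'
      rw [hb2q, Finset.mem_singleton] at hmem
      exact hmem
    -- now p and q have the same tip pair {y_p, z_p} = {z_q, y_q}
    rw [mem_Nbr] at hy1 hz1 hy2 hz2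
    have hx12 : p.2 = q.2 := by
      by_contra hne
      exact base_unique hsym H5 hn hne (Ne.symm hy1.1) (Ne.symm hz1.1)
        (by rw [hyzq]; exact Ne.symm hz2.1) (by rw [hzy]; exact Ne.symm hy2.1) hyz1
        (hy1.2.trans hz1.2.symm)
        (by rw [hyzq, hzy]; exact hz2.2.trans hy2.2.symm)
    have hc12 : p.1 = q.1 := by
      rw [← hy1.2, hyzq, hx12]
      exact hz2.2
    -- same cherry, but then ymin = zmax, contradiction
    have hcontr : ymin χ p.1 p.2 = zmax χ p.1 p.2 := by
      rw [hyzq, hc12, hx12]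
    exact hyz1 hcontr
  have hsubDS : ∀ p ∈ Ch, F1 p ∈ DS ∧ F2 p ∈ DS := by
    intro p hp
    obtain ⟨hc, hx⟩ := hmemCh _ hp
    obtain ⟨hy, hz, hyz⟩ := cherry_facts hx
    obtain ⟨hb1, hb2⟩ := cherry_base hsym H5 hn hx
    have hcol : χ (ymin χ p.1 p.2) (zmax χ p.1 p.2) ∈ usedColors χ :=
      Finset.mem_image_of_mem _
        (Finset.mem_filter.2 ⟨Finset.mem_univ ((ymin χ p.1 p.2, zmax χ p.1 p.2) : Fin n × Fin n), hyz⟩)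
    have hDmem : ∀ u v : Fin n,
        Nbr χ (χ (ymin χ p.1 p.2) (zmax χ p.1 p.2)) u = {v} →
        Nbr χ (χ (ymin χ p.1 p.2) (zmax χ p.1 p.2)) v = {u} →
        u ∈ Dc χ (χ (ymin χ p.1 p.2) (zmax χ p.1 p.2)) := by
      intro u v h1 h2
      simp only [Dc, Finset.mem_filter, Finset.mem_univ, true_and]
      refine ⟨by rw [h1, Finset.card_singleton], ?_⟩
      intro w hw
      rw [h1, Finset.mem_singleton] at hw
      subst hw
      rw [h2, Finset.card_singleton]
      omega
    constructor
    · rw [hF1, hDS, Finset.mem_sigma]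
      exact ⟨hcol, hDmem _ _ hb1 hb2⟩
    · rw [hF2, hDS, Finset.mem_sigma]
      exact ⟨hcol, hDmem _ _ hb2 hb1⟩
  have hcard : 2 * Ch.card ≤ DS.card := by
    calc 2 * Ch.card = (Ch.image F1).card + (Ch.image F2).card := by
          rw [Finset.card_image_of_injOn hinj1, Finset.card_image_of_injOn hinj2]
          ring
      _ = ((Ch.image F1) ∪ (Ch.image F2)).card := (Finset.card_union_of_disjoint hdisj).symm
      _ ≤ DS.card := Finset.card_le_card (Finset.union_subset
          (fun r hr => by
            obtain ⟨p, hp, hFp⟩ := Finset.mem_image.1 hr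
            exact hFp ▸ (hsubDS p hp).1)
          (fun r hr => by
            obtain ⟨p, hp, hFp⟩ := Finset.mem_image.1 hr
            exact hFp ▸ (hsubDS p hp).2))
  rw [hCh, hDS, Finset.card_sigma, Finset.card_sigma] at hcard
  exact hcard

end injection

section final

variable (hsym : ∀ i j, χ i j = χ j i)
  (H5 : ∀ S : Finset (Fin n), S.card = 4 → 5 ≤ (spannedColors χ S).card)
  (hn : 4 ≤ n)

include hsym H5 hn

lemma main_bound : 5 * (n - 1) ≤ 6 * (usedColors χ).card := by
  classical
  set C := usedColors χ with hC
  set P := ∑ c ∈ C, (Ac χ c).card with hP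
  set Q1 := ∑ c ∈ C, (Dc χ c).card with hQ1
  have hglob2 : n * (n - 1) = 4 * P + Q1 := by
    calc n * (n - 1) = ∑ c ∈ C, ∑ x : Fin n, (Nbr χ c x).card := global_count
      _ = ∑ c ∈ C, (4 * (Ac χ c).card + (Dc χ c).card) := by
          refine Finset.sum_congr rfl (fun c _ => ?_)
          rw [sum_deg hsym H5 c, Dg1_split c, Bc_card hsym H5 hn c]
          ring
      _ = 4 * P + Q1 := by
          rw [Finset.sum_add_distrib, ← Finset.mul_sum]
  have hbound : 3 * P + Q1 ≤ C.card * n := by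
    calc 3 * P + Q1 = ∑ c ∈ C, (3 * (Ac χ c).card + (Dc χ c).card) := by
          rw [Finset.sum_add_distrib, ← Finset.mul_sum]
      _ ≤ ∑ _c ∈ C, n := by
          refine Finset.sum_le_sum (fun c _ => ?_)
          have h1 := vertex_bound (χ := χ) c
          have h2 := Dg1_split (χ := χ) c
          have h3 := Bc_card hsym H5 hn (χ := χ) c
          omega
      _ = C.card * n := by rw [Finset.sum_const, smul_eq_mul]
  have hinj := inj_bound hsym H5 hn
  have hfinal : 5 * (n * (n - 1)) ≤ 6 * (C.card * n) := by
    rw [hglob2]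
    have : 2 * P ≤ Q1 := hinj
    linarith
  have hn0 : 0 < n := by omega
  refine Nat.le_of_mul_le_mul_left ?_ hn0
  calc n * (5 * (n - 1)) = 5 * (n * (n - 1)) := by ring
    _ ≤ 6 * (C.card * n) := hfinal
    _ = n * (6 * C.card) := by ring

end final

section rainbow

/-- the rainbow coloring. -/
def chi0 (n : ℕ) : Fin n → Fin n → ℕ := fun i j => min i.val j.val * n + max i.val j.val

lemma chi0_symm (n : ℕ) : ∀ i j, chi0 n i j = chi0 n j i := by
  intro i j
  unfold chi0
  rw [min_comm, max_comm]

lemma chi0_inj {i j i' j' : Fin n} (h : chi0 n i j = chi0 n i' j') :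
    min i.val j.val = min i'.val j'.val ∧ max i.val j.val = max i'.val j'.val := by
  unfold chi0 at h
  have hb : max i.val j.val < n := max_lt i.isLt j.isLt
  have hb' : max i'.val j'.val < n := max_lt i'.isLt j'.isLt
  have e1 : ∀ a b : ℕ, b < n → (a * n + b) / n = a := by
    intro a b hbn
    rw [mul_comm, Nat.mul_add_div (by omega)]
    simp [Nat.div_eq_of_lt hbn]
  have hmin : min i.val j.val = min i'.val j'.val := by
    have hq := congrArg (· / n) h
    rwa [e1 _ _ hb, e1 _ _ hb'] at hq
  rw [hmin] at h
  exact ⟨hmin, Nat.add_left_cancel h⟩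

lemma chi0_ne {u v u' v' : Fin n}
    (h : ¬((u = u' ∧ v = v') ∨ (u = v' ∧ v = u'))) : chi0 n u v ≠ chi0 n u' v' := by
  intro he
  obtain ⟨h1, h2⟩ := chi0_inj he
  apply h
  have hcase : (u.val = u'.val ∧ v.val = v'.val) ∨ (u.val = v'.val ∧ v.val = u'.val) := by
    omega
  rcases hcase with ⟨e1, e2⟩ | ⟨e1, e2⟩
  · exact Or.inl ⟨Fin.ext e1, Fin.ext e2⟩
  · exact Or.inr ⟨Fin.ext e1, Fin.ext e2⟩

lemma mem_spanned {χ : Fin n → Fin n → ℕ} {S : Finset (Fin n)} {u v : Fin n}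
    (hu : u ∈ S) (hv : v ∈ S) (huv : u ≠ v) : χ u v ∈ spannedColors χ S := by
  have hmem : ((u, v) : Fin n × Fin n) ∈ (S ×ˢ S).filter (fun e => e.1 ≠ e.2) :=
    Finset.mem_filter.2 ⟨Finset.mem_product.2 ⟨hu, hv⟩, huv⟩
  exact Finset.mem_image_of_mem (fun e => χ e.1 e.2) hmem

lemma chi0_is (n : ℕ) : IsPQColoring n 4 5 (chi0 n) := by
  refine ⟨chi0_symm n, ?_⟩
  intro S hS
  obtain ⟨a, ha⟩ : S.Nonempty := Finset.card_pos.1 (by omega)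
  have h3 : (S.erase a).card = 3 := by rw [Finset.card_erase_of_mem ha, hS]
  obtain ⟨b, c, d, hbc, hbd, hcd, hE⟩ := Finset.card_eq_three.1 h3
  have hbE : b ∈ S.erase a := by rw [hE]; simp
  have hcE : c ∈ S.erase a := by rw [hE]; simp
  have hdE : d ∈ S.erase a := by rw [hE]; simp
  have hb : b ∈ S := Finset.mem_of_mem_erase hbE
  have hc : c ∈ S := Finset.mem_of_mem_erase hcE
  have hd : d ∈ S := Finset.mem_of_mem_erase hdE
  have hab : a ≠ b := fun h => (Finset.ne_of_mem_erase hbE) h.symm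
  have hac : a ≠ c := fun h => (Finset.ne_of_mem_erase hcE) h.symm
  have had : a ≠ d := fun h => (Finset.ne_of_mem_erase hdE) h.symm
  have hn1 : chi0 n a b ∉ ({chi0 n a c, chi0 n a d, chi0 n b c, chi0 n b d} : Finset ℕ) := by
    simp only [Finset.mem_insert, Finset.mem_singleton, not_or]
    refine ⟨chi0_ne ?_, chi0_ne ?_, chi0_ne ?_, chi0_ne ?_⟩ <;>
      (rintro (⟨h1, h2⟩ | ⟨h1, h2⟩) <;> simp_all)
  have hn2 : chi0 n a c ∉ ({chi0 n a d, chi0 n b c, chi0 n b d} : Finset ℕ) := by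
    simp only [Finset.mem_insert, Finset.mem_singleton, not_or]
    refine ⟨chi0_ne ?_, chi0_ne ?_, chi0_ne ?_⟩ <;>
      (rintro (⟨h1, h2⟩ | ⟨h1, h2⟩) <;> simp_all)
  have hn3 : chi0 n a d ∉ ({chi0 n b c, chi0 n b d} : Finset ℕ) := by
    simp only [Finset.mem_insert, Finset.mem_singleton, not_or]
    refine ⟨chi0_ne ?_, chi0_ne ?_⟩ <;>
      (rintro (⟨h1, h2⟩ | ⟨h1, h2⟩) <;> simp_all)
  have hn4 : chi0 n b c ∉ ({chi0 n b d} : Finset ℕ) := by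
    simp only [Finset.mem_singleton]
    refine chi0_ne ?_
    rintro (⟨h1, h2⟩ | ⟨h1, h2⟩) <;> simp_all
  have h5card : ({chi0 n a b, chi0 n a c, chi0 n a d, chi0 n b c, chi0 n b d} : Finset ℕ).card = 5 := by
    rw [Finset.card_insert_of_notMem hn1, Finset.card_insert_of_notMem hn2,
        Finset.card_insert_of_notMem hn3, Finset.card_insert_of_notMem hn4,
        Finset.card_singleton]
  have hsub : ({chi0 n a b, chi0 n a c, chi0 n a d, chi0 n b c, chi0 n b d} : Finset ℕ) ⊆
      spannedColors (chi0 n) S := by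
    intro u hu
    simp only [Finset.mem_insert, Finset.mem_singleton] at hu
    rcases hu with rfl | rfl | rfl | rfl | rfl
    · exact mem_spanned ha hb hab
    · exact mem_spanned ha hc hac
    · exact mem_spanned ha hd had
    · exact mem_spanned hb hc hbc
    · exact mem_spanned hb hd hbd
  calc 5 = ({chi0 n a b, chi0 n a c, chi0 n a d, chi0 n b c, chi0 n b d} : Finset ℕ).card :=
        h5card.symm
    _ ≤ (spannedColors (chi0 n) S).card := Finset.card_le_card hsub

end rainbow

end EG

theorem erdosGyarfas_four_five_lower_bound :
    ∀ n : ℕ, 4 ≤ n → (5 / 6 : ℝ) * ((n : ℝ) - 1) ≤ (erdosGyarfas n 4 5 : ℝ) := by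
  intro n hn
  have hne : {m : ℕ | ∃ χ : Fin n → Fin n → ℕ,
      IsPQColoring n 4 5 χ ∧ (usedColors χ).card = m}.Nonempty :=
    ⟨(usedColors (EG.chi0 n)).card, EG.chi0 n, EG.chi0_is n, rfl⟩
  obtain ⟨χ, ⟨hsym, h5⟩, hcard⟩ := Nat.sInf_mem hne
  have key : 5 * (n - 1) ≤ 6 * (usedColors χ).card := EG.main_bound hsym h5 hn
  have hEG : erdosGyarfas n 4 5 = (usedColors χ).card := by
    rw [erdosGyarfas, hcard]
  rw [hEG]
  have hcast : (5 : ℝ) * ((n : ℝ) - 1) ≤ 6 * ((usedColors χ).card : ℝ) := by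
    have h1 : ((5 * (n - 1) : ℕ) : ℝ) ≤ ((6 * (usedColors χ).card : ℕ) : ℝ) :=
      Nat.cast_le.2 key
    rw [Nat.cast_mul, Nat.cast_mul, Nat.cast_sub (by omega : 1 ≤ n)] at h1
    push_cast at h1 ⊢
    linarith
  linarith
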